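/- For all positive reals a and b, KL(a,b) ≥ min( (a−b)²/(6b), |a−b| ), where KL(a,b) = a·log(a/b) − (a−b). -/

import Mathlib

noncomputable def KL (a b : ℝ) : ℝ := a * Real.log (a / b) - (a - b)

/-- `log x ≥ 1 - 1/x` for `x > 0`. -/
lemma kl_aux_log_ge {x : ℝ} (hx : 0 < x) : 1 - 1 / x ≤ Real.log x := by
  have := Real.one_sub_inv_le_log_of_pos hx
  rw [one_div]
  exact this

/-- Key inequality: `(x+1) log x ≥ 2(x-1)` for `x ≥ 1`. -/
lemma kl_aux_key {x : ℝ} (hx : 1 ≤ x) : 2 * (x - 1) ≤ (x + 1) * Real.log x := by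
  set f : ℝ → ℝ := fun t => (t + 1) * Real.log t - 2 * (t - 1) with hf
  have hderiv : ∀ t : ℝ, 0 < t → HasDerivAt f (Real.log t + (t + 1) * t⁻¹ - 2) t := by
    intro t ht
    have h1 : HasDerivAt (fun s : ℝ => (s + 1) * Real.log s)
        (1 * Real.log t + (t + 1) * t⁻¹) t :=
      ((hasDerivAt_id t).add_const 1).mul (Real.hasDerivAt_log ht.ne')
    have h2 : HasDerivAt (fun s : ℝ => 2 * (s - 1)) 2 t := by
      simpa using ((hasDerivAt_id t).sub_const 1).const_mul 2
    have h3 := h1.sub h2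
    simp only [one_mul] at h3
    exact h3
  have hmono : MonotoneOn f (Set.Ici 1) := by
    apply monotoneOn_of_deriv_nonneg (convex_Ici 1)
    · apply ContinuousOn.sub
      · exact (continuous_id.add continuous_const).continuousOn.mul
          (Real.continuousOn_log.mono (by intro t ht; simp only [Set.mem_Ici] at ht
                                          simp; intro h; rw [h] at ht; norm_num at ht))
      · exact (continuous_const.mul (continuous_id.sub continuous_const)).continuousOn
    · intro t ht
      rw [interior_Ici] at ht
      have ht1 : (1:ℝ) < t := ht
      exact (hderiv t (by linarith)).differentiableAt.differentiableWithinAt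
    · intro t ht
      rw [interior_Ici] at ht
      have ht1 : (1:ℝ) < t := ht
      have ht0 : (0:ℝ) < t := by linarith
      rw [(hderiv t ht0).deriv]
      have hl := kl_aux_log_ge ht0
      have : (t + 1) * t⁻¹ = 1 + 1 / t := by field_simp
      rw [this]
      have : 1 / t ≤ 1 := by rw [div_le_one ht0]; linarith
      linarith
  have h0 : f 1 = 0 := by simp [hf]
  have := hmono (Set.mem_Ici.mpr le_rfl) (Set.mem_Ici.mpr hx) hx
  rw [h0] at this
  simp only [hf] at this
  linarith

/-- `log 5 ≥ 8/5`. -/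
lemma kl_aux_log_five : (8:ℝ) / 5 ≤ Real.log 5 := by
  rw [Real.le_log_iff_exp_le (by norm_num)]
  have h8 : Real.exp 8 < 3125 := by
    have : Real.exp 8 = (Real.exp 1) ^ (8:ℕ) := by
      rw [← Real.exp_nat_mul]; norm_num
    rw [this]
    have h1 : (Real.exp 1) ^ (8:ℕ) < (2.7182818286:ℝ) ^ (8:ℕ) :=
      pow_lt_pow_left₀ Real.exp_one_lt_d9 (Real.exp_pos 1).le (by norm_num)
    calc (Real.exp 1) ^ (8:ℕ) < (2.7182818286:ℝ) ^ (8:ℕ) := h1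
      _ < 3125 := by norm_num
  have h5 : Real.exp (8/5) ^ (5:ℕ) = Real.exp 8 := by
    rw [← Real.exp_nat_mul]; norm_num
  have hlt : Real.exp (8/5) ^ (5:ℕ) < 5 ^ (5:ℕ) := by
    rw [h5]; norm_num; linarith
  exact (lt_of_pow_lt_pow_left₀ 5 (by norm_num) hlt).le

theorem kl_lower_bound (a b : ℝ) (ha : 0 < a) (hb : 0 < b) :
    min ((a - b) ^ 2 / (6 * b)) |a - b| ≤ KL a b := by
  unfold KL
  rcases le_or_gt a b with hab | hab
  · -- Case a ≤ b : KL ≥ (√a - √b)² ≥ (a-b)²/(6b)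
    set sa := Real.sqrt a with hsa
    set sb := Real.sqrt b with hsb
    have hsa0 : 0 < sa := Real.sqrt_pos.mpr ha
    have hsb0 : 0 < sb := Real.sqrt_pos.mpr hb
    have hsa2 : sa ^ 2 = a := Real.sq_sqrt ha.le
    have hsb2 : sb ^ 2 = b := Real.sq_sqrt hb.le
    have hsab : sa ≤ sb := Real.sqrt_le_sqrt hab
    have hlog : Real.log (a / b) = 2 * Real.log (sa / sb) := by
      rw [Real.log_div ha.ne' hb.ne', Real.log_div hsa0.ne' hsb0.ne',
        hsa, hsb, Real.log_sqrt ha.le, Real.log_sqrt hb.le]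
      ring
    have hl : 1 - 1 / (sa / sb) ≤ Real.log (sa / sb) :=
      kl_aux_log_ge (by positivity)
    have hinv : 1 / (sa / sb) = sb / sa := by field_simp
    rw [hinv] at hl
    have hKL : (sa - sb) ^ 2 ≤ a * Real.log (a / b) - (a - b) := by
      have h1 : a * (2 * (1 - sb / sa)) ≤ a * Real.log (a / b) := by
        rw [hlog]
        have := mul_le_mul_of_nonneg_left hl ha.le
        linarith
      have h2 : a * (2 * (1 - sb / sa)) = 2 * a - 2 * (sa * sb) := by
        have : a * (sb / sa) = sa * sb := by
          rw [← hsa2]; field_simp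
        have h := this
        nlinarith [this]
      nlinarith [h1, h2, hsa2, hsb2]
    have hmin : min ((a - b) ^ 2 / (6 * b)) |a - b| ≤ (sa - sb) ^ 2 := by
      refine (min_le_left _ _).trans ?_
      rw [div_le_iff₀ (by positivity)]
      have hab2 : (a - b) ^ 2 = (sa - sb) ^ 2 * (sa + sb) ^ 2 := by
        nlinarith [hsa2, hsb2]
      have h4 : (sa + sb) ^ 2 ≤ 6 * b := by nlinarith [hsa2, hsb2, hsab, hsb0]
      nlinarith [sq_nonneg (sa - sb)]
    exact hmin.trans hKL
  · rcases le_or_gt a (5 * b) with h5 | h5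
    · -- Case b < a ≤ 5b : KL ≥ (a-b)²/(a+b) ≥ (a-b)²/(6b)
      have hx : (1:ℝ) ≤ a / b := (one_le_div hb).mpr hab.le
      have hkey := kl_aux_key hx
      have hkey' : 2 * (a - b) ≤ (a + b) * Real.log (a / b) := by
        have := mul_le_mul_of_nonneg_left hkey hb.le
        have he : b * (2 * (a / b - 1)) = 2 * (a - b) := by field_simp
        have he2 : b * ((a / b + 1) * Real.log (a / b)) = (a + b) * Real.log (a / b) := by
          field_simp
        linarith [he ▸ he2 ▸ this]
      have hKL : (a - b) ^ 2 / (a + b) ≤ a * Real.log (a / b) - (a - b) := by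
        rw [div_le_iff₀ (by positivity)]
        have h1 : (2 * (a - b)) * a ≤ ((a + b) * Real.log (a / b)) * a :=
          mul_le_mul_of_nonneg_right hkey' ha.le
        nlinarith [h1]
      have hdiv : (a - b) ^ 2 / (6 * b) ≤ (a - b) ^ 2 / (a + b) := by
        apply div_le_div_of_nonneg_left (sq_nonneg _) (by positivity)
        linarith
      exact (min_le_left _ _).trans (hdiv.trans hKL)
    · -- Case a > 5b : KL ≥ a - b = |a - b|
      have hlog : Real.log (a / b) = Real.log (a / (5 * b)) + Real.log 5 := by
        rw [← Real.log_mul (by positivity) (by norm_num)]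
        congr 1
        field_simp
      have hl1 : 1 - 1 / (a / (5 * b)) ≤ Real.log (a / (5 * b)) :=
        kl_aux_log_ge (by positivity)
      have hinv : 1 / (a / (5 * b)) = 5 * b / a := by
        rw [one_div_div]
      rw [hinv] at hl1
      have hl : 1 - 5 * b / a + 8 / 5 ≤ Real.log (a / b) := by
        rw [hlog]; linarith [kl_aux_log_five]
      have hKL : a - b ≤ a * Real.log (a / b) - (a - b) := by
        have h1 : a * (1 - 5 * b / a + 8 / 5) ≤ a * Real.log (a / b) :=
          mul_le_mul_of_nonneg_left hl ha.le
        have h2 : a * (1 - 5 * b / a + 8 / 5) = a - 5 * b + 8 / 5 * a := by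
          field_simp
        rw [h2] at h1
        linarith
      have habs : |a - b| = a - b := abs_of_pos (by linarith)
      exact (min_le_right _ _).trans (habs.le.trans hKL)
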